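/- Let γ, τ be matrices in SL(2, ℝ) with entries γ = (a_γ, b_γ; c_γ, d_γ), τ = (a_τ, b_τ; c_τ, d_τ), and let γτ have entries (a_{γτ}, b_{γτ}; c_{γτ}, d_{γτ}). If c_γ c_τ c_{γτ} ≠ 0, then (a_γ + d_γ)/c_γ + (a_τ + d_τ)/c_τ - (a_{γτ} + d_{γτ})/c_{γτ} = c_γ/(c_τ c_{γτ}) + c_τ/(c_γ c_{γτ}) + c_{γτ}/(c_γ c_τ). -/

import Mathlib

open Matrix

theorem trace_over_c_three_term (γ τ : Matrix.SpecialLinearGroup (Fin 2) ℝ)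
    (h : γ 1 0 * τ 1 0 * (γ * τ) 1 0 ≠ 0) :
    (γ 0 0 + γ 1 1) / γ 1 0 + (τ 0 0 + τ 1 1) / τ 1 0
      - ((γ * τ) 0 0 + (γ * τ) 1 1) / (γ * τ) 1 0 =
    γ 1 0 / (τ 1 0 * (γ * τ) 1 0) + τ 1 0 / (γ 1 0 * (γ * τ) 1 0)
      + (γ * τ) 1 0 / (γ 1 0 * τ 1 0) := by
  have hγ := γ.2
  have hτ := τ.2
  have hmul : ∀ i j, (γ * τ) i j = γ i 0 * τ 0 j + γ i 1 * τ 1 j := by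
    intro i j
    simp [Matrix.SpecialLinearGroup.coe_mul, Matrix.mul_apply, Fin.sum_univ_two]
  rw [Matrix.det_fin_two] at hγ hτ
  simp only [ne_eq, mul_eq_zero, not_or] at h
  obtain ⟨⟨h1, h2⟩, h3⟩ := h
  rw [hmul, hmul, hmul] at *
  field_simp
  linear_combination (1 : ℝ) *
    (τ 1 0 ^ 2 * hγ + γ 1 0 ^ 2 * hτ)
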